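/- arXiv:2206.03723 — 2 statements merged into one kernel-verified Lean document; each statement's English description precedes it below -/
import Mathlib

section
/- There exist constants C > 0 and N such that for every n ≥ N the following holds: if G is a connected simple graph on n vertices maximizing p(G) = λ1(G) + λ1(Ḡ) among all graphs on n vertices, and x, x̄ are nonnegative unit eigenvectors of A(G) and A(Ḡ) for λ1(G) and λ1(Ḡ), then for every pair of vertices u and v, |(λ1(G)·x_u² + λ1(Ḡ)·x̄_u²) − (λ1(G)·x_v² + λ1(Ḡ)·x̄_v²)| ≤ C/n. -/
open scoped Matrix


/-- The adjacency matrix of a simple graph on `Fin n`, over `ℝ`. -/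
noncomputable def adjMat {n : ℕ} (G : SimpleGraph (Fin n)) : Matrix (Fin n) (Fin n) ℝ :=
  letI : DecidableRel G.Adj := Classical.decRel _
  G.adjMatrix ℝ

/-- The set of eigenvalues of a real square matrix. -/
def eigSet {n : ℕ} (M : Matrix (Fin n) (Fin n) ℝ) : Set ℝ :=
  {mu : ℝ | ∃ x : Fin n → ℝ, x ≠ 0 ∧ M.mulVec x = mu • x}

/-- The largest eigenvalue of a real square matrix. -/
noncomputable def lamMax {n : ℕ} (M : Matrix (Fin n) (Fin n) ℝ) : ℝ := sSup (eigSet M)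

/-- The least eigenvalue of a real square matrix. -/
noncomputable def lamMin {n : ℕ} (M : Matrix (Fin n) (Fin n) ℝ) : ℝ := sInf (eigSet M)

/-- `λ₁(G)`: the largest adjacency eigenvalue of `G`. -/
noncomputable def lam1 {n : ℕ} (G : SimpleGraph (Fin n)) : ℝ := lamMax (adjMat G)

/-- The degree of a vertex. -/
noncomputable def deg {n : ℕ} (G : SimpleGraph (Fin n)) (v : Fin n) : ℕ :=
  Nat.card {u : Fin n // G.Adj v u}

/-- The signless Laplacian `Q(G) = D(G) + A(G)`. -/
noncomputable def signlessLap {n : ℕ} (G : SimpleGraph (Fin n)) : Matrix (Fin n) (Fin n) ℝ :=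
  Matrix.diagonal (fun v => (deg G v : ℝ)) + adjMat G

/-- `q₁(G)`: the largest signless Laplacian eigenvalue. -/
noncomputable def q1 {n : ℕ} (G : SimpleGraph (Fin n)) : ℝ := lamMax (signlessLap G)

/-- `qₙ(G)`: the least signless Laplacian eigenvalue. -/
noncomputable def qmin {n : ℕ} (G : SimpleGraph (Fin n)) : ℝ := lamMin (signlessLap G)

/-- The `Q`-spread `s_Q(G) = q₁(G) - qₙ(G)`. -/
noncomputable def sQ {n : ℕ} (G : SimpleGraph (Fin n)) : ℝ := q1 G - qmin G

/-- The complete split graph `CS_{n,ω}`: a clique on the first `ω` vertices, completely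
joined to an independent set on the remaining `n - ω` vertices. -/
def CS (n w : ℕ) : SimpleGraph (Fin n) where
  Adj u v := u ≠ v ∧ ((u : ℕ) < w ∨ (v : ℕ) < w)
  symm := by constructor; intro u v h; exact ⟨h.1.symm, h.2.symm⟩
  loopless := by constructor; intro u h; exact h.1 rfl

/-- `K_{n-1}^+`: the complete graph on the first `n-1` vertices together with a pendant
vertex (the last vertex) joined to exactly one clique vertex (vertex `0`). -/
def KPlus (n : ℕ) : SimpleGraph (Fin n) where
  Adj u v := u ≠ v ∧ (((u : ℕ) < n - 1 ∧ (v : ℕ) < n - 1) ∨ (u : ℕ) = 0 ∨ (v : ℕ) = 0)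
  symm := by constructor; intro u v h; refine ⟨h.1.symm, ?_⟩; tauto
  loopless := by constructor; intro u h; exact h.1 rfl

section basics
variable {n : ℕ} (G : SimpleGraph (Fin n))

lemma adjMat_of_adj {a b : Fin n} (h : G.Adj a b) : adjMat G a b = 1 := by
  simp [adjMat, SimpleGraph.adjMatrix_apply, h]

lemma adjMat_of_not_adj {a b : Fin n} (h : ¬ G.Adj a b) : adjMat G a b = 0 := by
  simp [adjMat, SimpleGraph.adjMatrix_apply, h]

lemma adjMat_nonneg (a b : Fin n) : 0 ≤ adjMat G a b := by
  by_cases h : G.Adj a b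
  · rw [adjMat_of_adj G h]; norm_num
  · rw [adjMat_of_not_adj G h]

lemma adjMat_le_one (a b : Fin n) : adjMat G a b ≤ 1 := by
  by_cases h : G.Adj a b
  · rw [adjMat_of_adj G h]
  · rw [adjMat_of_not_adj G h]; norm_num

lemma adjMat_symm (a b : Fin n) : adjMat G a b = adjMat G b a := by
  by_cases h : G.Adj a b
  · rw [adjMat_of_adj G h, adjMat_of_adj G h.symm]
  · rw [adjMat_of_not_adj G h, adjMat_of_not_adj G (fun hh => h hh.symm)]

lemma adjMat_diag (a : Fin n) : adjMat G a a = 0 :=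
  adjMat_of_not_adj G (G.loopless.irrefl a)

lemma adjMat_isHermitian : (adjMat G).IsHermitian := by
  ext a b
  simp only [Matrix.conjTranspose_apply, star_trivial]
  exact adjMat_symm G b a

lemma eig_le (M : Matrix (Fin n) (Fin n) ℝ) (h1 : ∀ a b, |M a b| ≤ 1) :
    ∀ μ ∈ eigSet M, μ ≤ n := by
  rintro μ ⟨x, hx, hMx⟩
  obtain ⟨i, -, hi⟩ := Finset.exists_max_image Finset.univ (fun a => |x a|)
    ⟨⟨0, by rcases Nat.eq_zero_or_pos n with h | h; · exact absurd (funext fun a => absurd a.2 (by omega)) hx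
            · exact h⟩, Finset.mem_univ _⟩
  have hxi : 0 < |x i| := by
    rcases (abs_nonneg (x i)).lt_or_eq with h | h
    · exact h
    · exfalso; apply hx; funext a
      have h2 := hi a (Finset.mem_univ a)
      have h3 := abs_nonneg (x a)
      have : x a = 0 := abs_eq_zero.mp (le_antisymm (by linarith) h3)
      simpa using this
  have heq : (M.mulVec x) i = μ * x i := by rw [hMx]; simp
  have hb : |μ| * |x i| ≤ n * |x i| := by
    rw [← abs_mul, ← heq]
    calc |M.mulVec x i| = |∑ j, M i j * x j| := by rw [Matrix.mulVec, dotProduct]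
    _ ≤ ∑ j, |M i j * x j| := Finset.abs_sum_le_sum_abs _ _
    _ ≤ ∑ j : Fin n, |x i| := by
        apply Finset.sum_le_sum
        intro j _
        rw [abs_mul]
        calc |M i j| * |x j| ≤ 1 * |x i| :=
          mul_le_mul (h1 i j) (hi j (Finset.mem_univ j)) (abs_nonneg _) zero_le_one
        _ = |x i| := one_mul _
    _ = n * |x i| := by rw [Finset.sum_const]; simp [mul_comm]
  have : |μ| ≤ n := le_of_mul_le_mul_right (by simpa using hb) hxi
  exact le_trans (le_abs_self μ) this

lemma bddAbove_eig (M : Matrix (Fin n) (Fin n) ℝ) (h1 : ∀ a b, |M a b| ≤ 1) :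
    BddAbove (eigSet M) := ⟨n, fun μ hμ => eig_le M h1 μ hμ⟩

lemma adjMat_abs_le_one (a b : Fin n) : |adjMat G a b| ≤ 1 := by
  rw [abs_of_nonneg (adjMat_nonneg G a b)]; exact adjMat_le_one G a b

lemma lam1_le : lam1 G ≤ n := by
  apply Real.sSup_le
  · exact eig_le _ (adjMat_abs_le_one G)
  · exact Nat.cast_nonneg n

lemma eigenvalue_mem (M : Matrix (Fin n) (Fin n) ℝ) (hA : M.IsHermitian) (j : Fin n) :
    hA.eigenvalues j ∈ eigSet M :=
  ⟨_, fun h => hA.eigenvectorBasis.orthonormal.ne_zero j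
    (by ext i; simpa using congrFun h i), hA.mulVec_eigenvectorBasis j⟩

lemma rayleigh (M : Matrix (Fin n) (Fin n) ℝ) (hA : M.IsHermitian)
    (hB : BddAbove (eigSet M)) (x : Fin n → ℝ) :
    x ⬝ᵥ M.mulVec x ≤ lamMax M * (x ⬝ᵥ x) := by
  classical
  set U : Matrix (Fin n) (Fin n) ℝ := (hA.eigenvectorUnitary : Matrix (Fin n) (Fin n) ℝ) with hU
  have hstar : star U = Uᵀ := by
    rw [Matrix.star_eq_conjTranspose]
    ext a b
    simp [Matrix.conjTranspose_apply]
  have hUU : U * star U = 1 := Matrix.mem_unitaryGroup_iff.mp (hA.eigenvectorUnitary).2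
  set y : Fin n → ℝ := Matrix.vecMul x U with hy
  have hyalt : Uᵀ.mulVec x = y := Matrix.mulVec_transpose U x
  have hdiag : Matrix.diagonal (RCLike.ofReal ∘ hA.eigenvalues) = Matrix.diagonal hA.eigenvalues := by
    congr 1
  have hquad : x ⬝ᵥ M.mulVec x = ∑ j, hA.eigenvalues j * y j ^ 2 := by
    conv_lhs => rw [hA.spectral_theorem, Unitary.conjStarAlgAut_apply]
    rw [hdiag, ← hU, ← Matrix.mulVec_mulVec, ← Matrix.mulVec_mulVec, hstar, hyalt,
      Matrix.dotProduct_mulVec, ← hy, dotProduct]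
    apply Finset.sum_congr rfl
    intro j _
    rw [Matrix.mulVec_diagonal]
    ring
  have hnorm : x ⬝ᵥ x = ∑ j, y j ^ 2 := by
    have h1 : x ⬝ᵥ x = x ⬝ᵥ (U * star U) *ᵥ x := by rw [hUU, Matrix.one_mulVec]
    rw [h1, ← Matrix.mulVec_mulVec, hstar, hyalt, Matrix.dotProduct_mulVec, ← hy,
      dotProduct]
    apply Finset.sum_congr rfl
    intro j _
    ring
  rw [hquad, hnorm, Finset.mul_sum]
  apply Finset.sum_le_sum
  intro j _
  have hj : hA.eigenvalues j ≤ lamMax M := le_csSup hB (eigenvalue_mem M hA j)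
  exact mul_le_mul_of_nonneg_right hj (sq_nonneg _)

lemma lam1_rayleigh (H : SimpleGraph (Fin n)) (x : Fin n → ℝ) :
    x ⬝ᵥ (adjMat H).mulVec x ≤ lam1 H * (x ⬝ᵥ x) :=
  rayleigh _ (adjMat_isHermitian H) (bddAbove_eig _ (adjMat_abs_le_one H)) x

lemma entry_bound (H : SimpleGraph (Fin n)) (x : Fin n → ℝ)
    (hx2 : ∑ v, x v ^ 2 = 1) (heig : (adjMat H).mulVec x = lam1 H • x) (u : Fin n) :
    (lam1 H)^2 * x u ^ 2 ≤ n := by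
  have h1 : lam1 H * x u = ∑ b, adjMat H u b * x b := by
    rw [← dotProduct, ← Matrix.mulVec, heig]; simp
  have h2 : (lam1 H * x u)^2 ≤ (∑ b, (adjMat H u b)^2) * (∑ b, (x b)^2) := by
    rw [h1]; exact Finset.sum_mul_sq_le_sq_mul_sq _ _ _
  have h3 : (∑ b, (adjMat H u b)^2) ≤ n := by
    calc (∑ b, (adjMat H u b)^2) ≤ ∑ _b : Fin n, 1 := by
          apply Finset.sum_le_sum
          intro b _
          have := adjMat_nonneg H u b
          have := adjMat_le_one H u b
          nlinarith
    _ = n := by simp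
  calc (lam1 H)^2 * x u ^2 = (lam1 H * x u)^2 := by ring
  _ ≤ (∑ b, (adjMat H u b)^2) * 1 := by rw [← hx2]; exact h2
  _ ≤ n := by rw [mul_one]; exact h3

lemma CS_lb (n w : ℕ) (hw : w < n) :
    ((w : ℝ) * ((n:ℝ) - 1) + ((n:ℝ) - (w:ℝ)) * (w:ℝ)) ≤ lam1 (CS n w) * n := by
  classical
  set H := CS n w with hH
  set o : Fin n → ℝ := fun _ => 1 with ho
  have hoo : o ⬝ᵥ o = n := by simp [dotProduct, ho]
  have hrow : ∀ a : Fin n, (adjMat H).mulVec o a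
      = ((Finset.univ.filter (fun b : Fin n => H.Adj a b)).card : ℝ) := by
    intro a
    rw [Matrix.mulVec, dotProduct, ← Finset.sum_boole]
    apply Finset.sum_congr rfl
    intro b _
    by_cases hA : H.Adj a b
    · simp [adjMat_of_adj _ hA, hA, ho]
    · simp [adjMat_of_not_adj _ hA, hA, ho]
  have h1 : ∀ a : Fin n, (a:ℕ) < w →
      ((Finset.univ.filter (fun b : Fin n => H.Adj a b)).card : ℝ) = (n:ℝ) - 1 := by
    intro a ha
    have he : (Finset.univ.filter (fun b : Fin n => H.Adj a b)) = Finset.univ.erase a := by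
      ext b
      simp only [Finset.mem_filter, Finset.mem_univ, true_and, Finset.mem_erase, and_true]
      constructor
      · rintro ⟨h1, -⟩; exact Ne.symm h1
      · intro h1; exact ⟨Ne.symm h1, Or.inl ha⟩
    rw [he, Finset.card_erase_of_mem (Finset.mem_univ a)]
    simp only [Finset.card_univ, Fintype.card_fin]
    rw [Nat.cast_sub (by omega)]
    simp
  have h2 : ∀ a : Fin n, ¬ (a:ℕ) < w →
      ((Finset.univ.filter (fun b : Fin n => H.Adj a b)).card : ℝ) = (w:ℝ) := by
    intro a ha
    have he : (Finset.univ.filter (fun b : Fin n => H.Adj a b))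
        = Finset.Iio (⟨w, hw⟩ : Fin n) := by
      ext b
      simp only [Finset.mem_filter, Finset.mem_univ, true_and, Finset.mem_Iio, Fin.lt_def]
      constructor
      · rintro ⟨h1, h2 | h2⟩
        · exact absurd h2 ha
        · exact h2
      · intro hb
        refine ⟨?_, Or.inr hb⟩
        intro h; apply ha; rw [h]; exact hb
    rw [he, Fin.card_Iio]
  have hfw : (Finset.univ.filter (fun a : Fin n => (a:ℕ) < w)).card = w := by
    have he : (Finset.univ.filter (fun a : Fin n => (a:ℕ) < w))
        = Finset.Iio (⟨w, hw⟩ : Fin n) := by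
      ext b; simp [Fin.lt_def]
    rw [he, Fin.card_Iio]
  have hfnw : (Finset.univ.filter (fun a : Fin n => ¬ (a:ℕ) < w)).card = n - w := by
    have := Finset.card_filter_add_card_filter_not
      (s := (Finset.univ : Finset (Fin n))) (p := fun a : Fin n => (a:ℕ) < w)
    simp only [Finset.card_univ, Fintype.card_fin] at this
    omega
  have hquad : o ⬝ᵥ (adjMat H).mulVec o
      = (w : ℝ) * ((n:ℝ) - 1) + ((n:ℝ) - (w:ℝ)) * (w:ℝ) := by
    rw [dotProduct]
    have : ∀ a : Fin n, o a * (adjMat H).mulVec o a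
        = if (a:ℕ) < w then (n:ℝ) - 1 else (w:ℝ) := by
      intro a
      rw [ho]
      simp only [one_mul]
      by_cases ha : (a:ℕ) < w
      · rw [hrow a, h1 a ha, if_pos ha]
      · rw [hrow a, h2 a ha, if_neg ha]
    rw [Finset.sum_congr rfl (fun a _ => this a), Finset.sum_ite, Finset.sum_const,
      Finset.sum_const, hfw, hfnw]
    simp only [nsmul_eq_mul, Nat.cast_sub hw.le]
  have := lam1_rayleigh H o
  rw [hquad, hoo] at this
  exact this

lemma CS_compl_lb (n w : ℕ) (hw : w < n) :
    ((n:ℝ) - (w:ℝ) - 1) ≤ lam1 (CS n w)ᶜ := by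
  classical
  set H := (CS n w)ᶜ with hH
  set y : Fin n → ℝ := fun a => if (a:ℕ) < w then 0 else 1 with hy
  have hAdj : ∀ a b : Fin n, H.Adj a b ↔ (a ≠ b ∧ ¬ (a:ℕ) < w ∧ ¬ (b:ℕ) < w) := by
    intro a b
    rw [hH, SimpleGraph.compl_adj]
    constructor
    · rintro ⟨h1, h2⟩
      refine ⟨h1, ?_, ?_⟩ <;> (intro h; exact h2 ⟨h1, by tauto⟩)
    · rintro ⟨h1, h2, h3⟩
      exact ⟨h1, fun hadj => Or.elim hadj.2 h2 h3⟩
  have hyy : y ⬝ᵥ y = (n:ℝ) - w := by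
    rw [dotProduct]
    have : ∀ a : Fin n, y a * y a = if (a:ℕ) < w then (0:ℝ) else 1 := by
      intro a; rw [hy]; by_cases ha : (a:ℕ) < w <;> simp [ha]
    rw [Finset.sum_congr rfl (fun a _ => this a), Finset.sum_ite, Finset.sum_const,
      Finset.sum_const]
    have hfnw : (Finset.univ.filter (fun a : Fin n => ¬ (a:ℕ) < w)).card = n - w := by
      have hfw : (Finset.univ.filter (fun a : Fin n => (a:ℕ) < w)).card = w := by
        have he : (Finset.univ.filter (fun a : Fin n => (a:ℕ) < w))
            = Finset.Iio (⟨w, hw⟩ : Fin n) := by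
          ext b; simp [Fin.lt_def]
        rw [he, Fin.card_Iio]
      have := Finset.card_filter_add_card_filter_not
        (s := (Finset.univ : Finset (Fin n))) (p := fun a : Fin n => (a:ℕ) < w)
      simp only [Finset.card_univ, Fintype.card_fin] at this
      omega
    rw [hfnw]
    simp only [nsmul_eq_mul, Nat.cast_sub hw.le, smul_zero]
    ring
  have hrow : ∀ a : Fin n, ¬ (a:ℕ) < w → (adjMat H).mulVec y a = (n:ℝ) - w - 1 := by
    intro a ha
    rw [Matrix.mulVec, dotProduct]
    have hterm : ∀ b : Fin n, adjMat H a b * y b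
        = if (b ≠ a ∧ ¬ (b:ℕ) < w) then (1:ℝ) else 0 := by
      intro b
      by_cases hb : (b:ℕ) < w
      · rw [hy]; simp only [hb, if_true, if_neg (by tauto)]
        simp
      · by_cases hba : b = a
        · subst hba
          rw [adjMat_of_not_adj _ (H.loopless.irrefl b)]
          simp [hb]
        · have : H.Adj a b := (hAdj a b).mpr ⟨Ne.symm hba, ha, hb⟩
          rw [adjMat_of_adj _ this, hy]
          simp [hb, hba]
    rw [Finset.sum_congr rfl (fun b _ => hterm b), Finset.sum_boole]
    have he : (Finset.univ.filter (fun b : Fin n => b ≠ a ∧ ¬ (b:ℕ) < w))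
        = (Finset.univ.filter (fun b : Fin n => ¬ (b:ℕ) < w)).erase a := by
      ext b
      simp only [Finset.mem_filter, Finset.mem_univ, true_and, Finset.mem_erase]
      try tauto
    rw [he, Finset.card_erase_of_mem
      (by simp only [Finset.mem_filter, Finset.mem_univ, true_and]; exact ha)]
    have hfnw : (Finset.univ.filter (fun b : Fin n => ¬ (b:ℕ) < w)).card = n - w := by
      have hfw : (Finset.univ.filter (fun b : Fin n => (b:ℕ) < w)).card = w := by
        have he2 : (Finset.univ.filter (fun b : Fin n => (b:ℕ) < w))
            = Finset.Iio (⟨w, hw⟩ : Fin n) := by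
          ext b; simp [Fin.lt_def]
        rw [he2, Fin.card_Iio]
      have := Finset.card_filter_add_card_filter_not
        (s := (Finset.univ : Finset (Fin n))) (p := fun b : Fin n => (b:ℕ) < w)
      simp only [Finset.card_univ, Fintype.card_fin] at this
      omega
    rw [hfnw, Nat.cast_sub (by omega : (1:ℕ) ≤ n - w), Nat.cast_sub hw.le]
    push_cast
    ring
  have hquad : y ⬝ᵥ (adjMat H).mulVec y ≥ ((n:ℝ) - w - 1) * ((n:ℝ) - w) := by
    rw [dotProduct]
    have : ∀ a : Fin n, y a * (adjMat H).mulVec y a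
        = if (a:ℕ) < w then 0 else (n:ℝ) - w - 1 := by
      intro a
      by_cases ha : (a:ℕ) < w
      · rw [hy]; simp [ha]
      · rw [hy]; simp only [ha, if_false, one_mul]; rw [hrow a ha]
    rw [Finset.sum_congr rfl (fun a _ => this a), Finset.sum_ite, Finset.sum_const,
      Finset.sum_const]
    have hfnw : (Finset.univ.filter (fun a : Fin n => ¬ (a:ℕ) < w)).card = n - w := by
      have hfw : (Finset.univ.filter (fun a : Fin n => (a:ℕ) < w)).card = w := by
        have he : (Finset.univ.filter (fun a : Fin n => (a:ℕ) < w))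
            = Finset.Iio (⟨w, hw⟩ : Fin n) := by
          ext b; simp [Fin.lt_def]
        rw [he, Fin.card_Iio]
      have := Finset.card_filter_add_card_filter_not
        (s := (Finset.univ : Finset (Fin n))) (p := fun a : Fin n => (a:ℕ) < w)
      simp only [Finset.card_univ, Fintype.card_fin] at this
      omega
    rw [hfnw]
    simp only [nsmul_eq_mul, Nat.cast_sub hw.le, smul_zero]
    ring_nf
    nlinarith [Nat.cast_nonneg (α := ℝ) w]
  have hR := lam1_rayleigh H y
  rw [hyy] at hR
  have hnw : (0:ℝ) < (n:ℝ) - w := by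
    have : (w:ℝ) < n := by exact_mod_cast hw
    linarith
  nlinarith

lemma row_sum_erase (M : Matrix (Fin n) (Fin n) ℝ) (u : Fin n) (hd : M u u = 0)
    (x : Fin n → ℝ) :
    ∑ b ∈ Finset.univ.erase u, M u b * x b = M.mulVec x u := by
  rw [Matrix.mulVec, dotProduct]
  rw [← Finset.sum_erase_add Finset.univ _ (Finset.mem_univ u), hd]
  ring

lemma quad_split (M : Matrix (Fin n) (Fin n) ℝ) (hsym : ∀ a b, M a b = M b a)
    (u : Fin n) (x : Fin n → ℝ) :
    x ⬝ᵥ M.mulVec x = (∑ a ∈ Finset.univ.erase u, ∑ b ∈ Finset.univ.erase u,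
        M a b * x a * x b)
      + 2 * x u * (∑ b ∈ Finset.univ.erase u, M u b * x b) + M u u * x u * x u := by
  have h0 : x ⬝ᵥ M.mulVec x = ∑ a, ∑ b, M a b * x a * x b := by
    rw [dotProduct]
    apply Finset.sum_congr rfl
    intro a _
    rw [Matrix.mulVec, dotProduct, Finset.mul_sum]
    apply Finset.sum_congr rfl
    intro b _
    ring
  rw [h0, ← Finset.sum_erase_add Finset.univ _ (Finset.mem_univ u)]
  have h1 : ∀ a : Fin n, ∑ b, M a b * x a * x b
      = (∑ b ∈ Finset.univ.erase u, M a b * x a * x b) + M a u * x a * x u := by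
    intro a
    rw [← Finset.sum_erase_add Finset.univ _ (Finset.mem_univ u)]
  rw [Finset.sum_congr rfl (fun a _ => h1 a), Finset.sum_add_distrib, h1 u]
  have h2 : ∑ a ∈ Finset.univ.erase u, M a u * x a * x u
      = x u * ∑ b ∈ Finset.univ.erase u, M u b * x b := by
    rw [Finset.mul_sum]
    apply Finset.sum_congr rfl
    intro a _
    rw [hsym a u]
    ring
  have h3 : ∑ b ∈ Finset.univ.erase u, M u b * x u * x b
      = x u * ∑ b ∈ Finset.univ.erase u, M u b * x b := by
    rw [Finset.mul_sum]
    apply Finset.sum_congr rfl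
    intro b _
    ring
  rw [h2, h3]
  ring

lemma exchange_quad (M M' : Matrix (Fin n) (Fin n) ℝ)
    (hsym : ∀ a b, M a b = M b a) (hsym' : ∀ a b, M' a b = M' b a)
    (u : Fin n) (hd : M u u = 0) (hd' : M' u u = 0)
    (hsame : ∀ a b, a ≠ u → b ≠ u → M' a b = M a b)
    (x : Fin n → ℝ) (t : ℝ) :
    (Function.update x u t) ⬝ᵥ M'.mulVec (Function.update x u t)
      = x ⬝ᵥ M.mulVec x - 2 * x u * M.mulVec x u
        + 2 * t * (∑ b ∈ Finset.univ.erase u, M' u b * x b) := by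
  set x' := Function.update x u t with hx'
  have hxu : x' u = t := Function.update_self u t x
  have hxo : ∀ a : Fin n, a ≠ u → x' a = x a := fun a ha => Function.update_of_ne ha t x
  rw [quad_split M' hsym' u x', quad_split M hsym u x, hd, hd']
  have e1 : ∑ a ∈ Finset.univ.erase u, ∑ b ∈ Finset.univ.erase u, M' a b * x' a * x' b
      = ∑ a ∈ Finset.univ.erase u, ∑ b ∈ Finset.univ.erase u, M a b * x a * x b := by
    apply Finset.sum_congr rfl
    intro a ha
    apply Finset.sum_congr rfl
    intro b hb
    rw [hsame a b (Finset.ne_of_mem_erase ha) (Finset.ne_of_mem_erase hb),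
      hxo a (Finset.ne_of_mem_erase ha), hxo b (Finset.ne_of_mem_erase hb)]
  have e2 : ∑ b ∈ Finset.univ.erase u, M' u b * x' b
      = ∑ b ∈ Finset.univ.erase u, M' u b * x b := by
    apply Finset.sum_congr rfl
    intro b hb
    rw [hxo b (Finset.ne_of_mem_erase hb)]
  rw [e1, e2, hxu, ← row_sum_erase M u hd x]
  ring

lemma norm_update (x : Fin n → ℝ) (u : Fin n) (t : ℝ) :
    (Function.update x u t) ⬝ᵥ (Function.update x u t)
      = x ⬝ᵥ x - x u * x u + t * t := by
  set x' := Function.update x u t with hx'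
  have hxu : x' u = t := Function.update_self u t x
  have hxo : ∀ a : Fin n, a ≠ u → x' a = x a := fun a ha => Function.update_of_ne ha t x
  rw [dotProduct, dotProduct,
    ← Finset.sum_erase_add Finset.univ _ (Finset.mem_univ u),
    ← Finset.sum_erase_add Finset.univ (fun a => x a * x a) (Finset.mem_univ u)]
  have e1 : ∑ a ∈ Finset.univ.erase u, x' a * x' a
      = ∑ a ∈ Finset.univ.erase u, x a * x a := by
    apply Finset.sum_congr rfl
    intro a ha
    rw [hxo a (Finset.ne_of_mem_erase ha)]
  rw [e1, hxu]
  ring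

def swapG (G : SimpleGraph (Fin n)) (u v : Fin n) : SimpleGraph (Fin n) where
  Adj a b := (a ≠ u ∧ b ≠ u ∧ G.Adj a b) ∨ (a = u ∧ b ≠ u ∧ b ≠ v ∧ G.Adj v b)
    ∨ (b = u ∧ a ≠ u ∧ a ≠ v ∧ G.Adj v a)
  symm := by
    constructor
    intro a b h
    rcases h with ⟨h1,h2,h3⟩|⟨h1,h2,h3,h4⟩|⟨h1,h2,h3,h4⟩
    · exact Or.inl ⟨h2,h1,h3.symm⟩
    · exact Or.inr (Or.inr ⟨h1,h2,h3,h4⟩)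
    · exact Or.inr (Or.inl ⟨h1,h2,h3,h4⟩)
  loopless := by
    constructor
    intro a h
    rcases h with ⟨h1,h2,h3⟩|⟨h1,h2,h3,h4⟩|⟨h1,h2,h3,h4⟩
    · exact G.loopless.irrefl a h3
    · exact h2 h1
    · exact h2 h1

lemma swapG_same (G : SimpleGraph (Fin n)) (u v a b : Fin n) (ha : a ≠ u) (hb : b ≠ u) :
    (swapG G u v).Adj a b ↔ G.Adj a b := by
  constructor
  · rintro (⟨-,-,h⟩|⟨h1,-⟩|⟨h1,-⟩)
    · exact h
    · exact absurd h1 ha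
    · exact absurd h1 hb
  · intro h; exact Or.inl ⟨ha, hb, h⟩

lemma swapG_row (G : SimpleGraph (Fin n)) (u v b : Fin n) (hb : b ≠ u) (hbv : b ≠ v) :
    (swapG G u v).Adj u b ↔ G.Adj v b := by
  constructor
  · rintro (⟨h1,-⟩|⟨-,-,-,h⟩|⟨h1,-⟩)
    · exact absurd rfl h1
    · exact h
    · exact absurd h1 hb
  · intro h; exact Or.inr (Or.inl ⟨rfl, hb, hbv, h⟩)

lemma swapG_not_uv (G : SimpleGraph (Fin n)) (u v : Fin n) : ¬ (swapG G u v).Adj u v := by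
  rintro (⟨h1,-⟩|⟨-,-,h3,-⟩|⟨h1,h2,-⟩)
  · exact h1 rfl
  · exact h3 rfl
  · exact h2 rfl

lemma erase_erase_sum (g : Fin n → ℝ) (u v : Fin n) (huv : u ≠ v) (hgv : g v = 0) :
    ∑ b ∈ (Finset.univ.erase u).erase v, g b = (∑ b, g b) - g u := by
  rw [Finset.erase_right_comm]
  have h1 : ∑ b ∈ (Finset.univ.erase v).erase u, g b + g u
      = ∑ b ∈ Finset.univ.erase v, g b :=
    Finset.sum_erase_add _ _ (Finset.mem_erase.mpr ⟨huv, Finset.mem_univ u⟩)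
  have h2 : ∑ b ∈ Finset.univ.erase v, g b + g v = ∑ b, g b :=
    Finset.sum_erase_add _ _ (Finset.mem_univ v)
  rw [hgv] at h2
  linarith

lemma swap_row_sum (G : SimpleGraph (Fin n)) (u v : Fin n) (huv : u ≠ v) (x : Fin n → ℝ) :
    ∑ b ∈ Finset.univ.erase u, adjMat (swapG G u v) u b * x b
      = (adjMat G).mulVec x v - adjMat G u v * x u := by
  have hmem : v ∈ Finset.univ.erase u := Finset.mem_erase.mpr ⟨Ne.symm huv, Finset.mem_univ v⟩
  have h1 : ∑ b ∈ (Finset.univ.erase u).erase v, adjMat (swapG G u v) u b * x b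
        + adjMat (swapG G u v) u v * x v
      = ∑ b ∈ Finset.univ.erase u, adjMat (swapG G u v) u b * x b :=
    Finset.sum_erase_add _ _ hmem
  rw [adjMat_of_not_adj _ (swapG_not_uv G u v)] at h1
  have h2 : ∑ b ∈ (Finset.univ.erase u).erase v, adjMat (swapG G u v) u b * x b
      = ∑ b ∈ (Finset.univ.erase u).erase v, adjMat G v b * x b := by
    apply Finset.sum_congr rfl
    intro b hb
    have hbv : b ≠ v := Finset.ne_of_mem_erase hb
    have hbu : b ≠ u := Finset.ne_of_mem_erase (Finset.mem_of_mem_erase hb)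
    by_cases hA : G.Adj v b
    · rw [adjMat_of_adj _ ((swapG_row G u v b hbu hbv).mpr hA), adjMat_of_adj _ hA]
    · rw [adjMat_of_not_adj _ (fun hh => hA ((swapG_row G u v b hbu hbv).mp hh)),
        adjMat_of_not_adj _ hA]
  have h3 : ∑ b ∈ (Finset.univ.erase u).erase v, adjMat G v b * x b
      = (∑ b, adjMat G v b * x b) - adjMat G v u * x u :=
    erase_erase_sum _ u v huv (by rw [adjMat_diag]; ring)
  have h4 : (∑ b, adjMat G v b * x b) = (adjMat G).mulVec x v := by
    rw [Matrix.mulVec, dotProduct]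
  rw [← h1, h2, h3, h4, adjMat_symm G v u]
  ring

lemma swapG_compl_uv (G : SimpleGraph (Fin n)) (u v : Fin n) (huv : u ≠ v) :
    (swapG G u v)ᶜ.Adj u v :=
  (SimpleGraph.compl_adj _ u v).mpr ⟨huv, swapG_not_uv G u v⟩

lemma swapG_compl_row (G : SimpleGraph (Fin n)) (u v b : Fin n) (hb : b ≠ u) (hbv : b ≠ v) :
    (swapG G u v)ᶜ.Adj u b ↔ Gᶜ.Adj v b := by
  rw [SimpleGraph.compl_adj, SimpleGraph.compl_adj, swapG_row G u v b hb hbv]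
  constructor
  · rintro ⟨-, h⟩; exact ⟨Ne.symm hbv, h⟩
  · rintro ⟨-, h⟩; exact ⟨Ne.symm hb, h⟩

lemma swapG_compl_same (G : SimpleGraph (Fin n)) (u v a b : Fin n) (ha : a ≠ u) (hb : b ≠ u) :
    (swapG G u v)ᶜ.Adj a b ↔ Gᶜ.Adj a b := by
  rw [SimpleGraph.compl_adj, SimpleGraph.compl_adj, swapG_same G u v a b ha hb]

lemma swap_compl_row_sum (G : SimpleGraph (Fin n)) (u v : Fin n) (huv : u ≠ v)
    (x : Fin n → ℝ) :
    ∑ b ∈ Finset.univ.erase u, adjMat (swapG G u v)ᶜ u b * x b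
      = x v + (adjMat Gᶜ).mulVec x v - adjMat Gᶜ u v * x u := by
  have hmem : v ∈ Finset.univ.erase u := Finset.mem_erase.mpr ⟨Ne.symm huv, Finset.mem_univ v⟩
  have h1 : ∑ b ∈ (Finset.univ.erase u).erase v, adjMat (swapG G u v)ᶜ u b * x b
        + adjMat (swapG G u v)ᶜ u v * x v
      = ∑ b ∈ Finset.univ.erase u, adjMat (swapG G u v)ᶜ u b * x b :=
    Finset.sum_erase_add _ _ hmem
  rw [adjMat_of_adj _ (swapG_compl_uv G u v huv)] at h1
  have h2 : ∑ b ∈ (Finset.univ.erase u).erase v, adjMat (swapG G u v)ᶜ u b * x b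
      = ∑ b ∈ (Finset.univ.erase u).erase v, adjMat Gᶜ v b * x b := by
    apply Finset.sum_congr rfl
    intro b hb
    have hbv : b ≠ v := Finset.ne_of_mem_erase hb
    have hbu : b ≠ u := Finset.ne_of_mem_erase (Finset.mem_of_mem_erase hb)
    by_cases hA : Gᶜ.Adj v b
    · rw [adjMat_of_adj _ ((swapG_compl_row G u v b hbu hbv).mpr hA), adjMat_of_adj _ hA]
    · rw [adjMat_of_not_adj _ (fun hh => hA ((swapG_compl_row G u v b hbu hbv).mp hh)),
        adjMat_of_not_adj _ hA]
  have h3 : ∑ b ∈ (Finset.univ.erase u).erase v, adjMat Gᶜ v b * x b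
      = (∑ b, adjMat Gᶜ v b * x b) - adjMat Gᶜ v u * x u :=
    erase_erase_sum _ u v huv (by rw [adjMat_diag]; ring)
  have h4 : (∑ b, adjMat Gᶜ v b * x b) = (adjMat Gᶜ).mulVec x v := by
    rw [Matrix.mulVec, dotProduct]
  rw [← h1, h2, h3, h4, adjMat_symm Gᶜ v u]
  ring

lemma cross_bound (nr P st : ℝ) (hnr : 0 < nr) (hP0 : 0 ≤ P) (hP1 : P ≤ 2*nr)
    (hst : -((25/nr)*(25/nr)) ≤ st) : -(P*st) ≤ 50*(25/nr) := by
  nlinarith [mul_nonneg hP0 (by linarith : (0:ℝ) ≤ st + (25/nr)*(25/nr)),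
    mul_nonneg (by linarith : (0:ℝ) ≤ 2*nr - P) (by positivity : (0:ℝ) ≤ (25/nr)*(25/nr)),
    (by field_simp : nr*((25/nr)*(25/nr)) = 25*(25/nr))]

lemma final_arith (nr lam lamb s t e1 e2 f L1 L2 : ℝ)
    (hn : 100 ≤ nr)
    (hs1 : s ≤ 25/nr) (hs2 : -(25/nr) ≤ s) (ht1 : t ≤ 25/nr) (ht2 : -(25/nr) ≤ t)
    (hl2 : lam ≤ nr) (hm2 : lamb ≤ nr) (hl0 : 0 ≤ lam) (hm0 : 0 ≤ lamb)
    (he1 : 0 ≤ e1) (he12 : e1 ≤ 50/nr) (he2 : 0 ≤ e2) (he22 : e2 ≤ 50/nr)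
    (hf : 0 ≤ f)
    (hR1 : lam*(1+2*s) - e1 ≤ L1 * (1+s))
    (hR2 : lamb*(1+2*t) + f - e2 ≤ L2 * (1+t))
    (hsum : L1 + L2 ≤ lam + lamb) :
    lam*s + lamb*t ≤ 2700/nr := by
  have hnr : (0:ℝ) < nr := by linarith
  have heps : (25/nr) * nr = 25 := by field_simp
  have hepsle : 25/nr < 1 := by rw [div_lt_one hnr]; linarith
  have hepspos : 0 < 25/nr := by positivity
  have h1s : 0 < 1 + s := by linarith
  have h1t : 0 < 1 + t := by linarith
  have h1s2 : 1 + s ≤ 2 := by linarith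
  have h1t2 : 1 + t ≤ 2 := by linarith
  have hP : (lam*(1+2*s) - e1)*(1+t) + (lamb*(1+2*t) + f - e2)*(1+s)
      ≤ (lam+lamb)*(1+s)*(1+t) := by
    have m1 : (lam*(1+2*s) - e1)*(1+t) ≤ (L1 * (1+s))*(1+t) :=
      mul_le_mul_of_nonneg_right hR1 (le_of_lt h1t)
    have m2 : (lamb*(1+2*t) + f - e2)*(1+s) ≤ (L2 * (1+t))*(1+s) :=
      mul_le_mul_of_nonneg_right hR2 (le_of_lt h1s)
    have m4 : (L1 + L2)*(1+s)*(1+t) ≤ (lam+lamb)*(1+s)*(1+t) := by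
      have := mul_le_mul_of_nonneg_right hsum (le_of_lt (mul_pos h1s h1t))
      calc (L1 + L2)*(1+s)*(1+t) = (L1+L2)*((1+s)*(1+t)) := by ring
      _ ≤ (lam+lamb)*((1+s)*(1+t)) := this
      _ = (lam+lamb)*(1+s)*(1+t) := by ring
    nlinarith [m1, m2, m4]
  have hid : (lam*(1+2*s) - e1)*(1+t) + (lamb*(1+2*t) + f - e2)*(1+s)
      - (lam+lamb)*(1+s)*(1+t)
      = lam*s + lamb*t + (lam+lamb)*(s*t) - e1*(1+t) - e2*(1+s) + f*(1+s) := by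
    ring
  have hst : -((25/nr)*(25/nr)) ≤ s*t := by
    nlinarith [mul_nonneg (by linarith : (0:ℝ) ≤ 25/nr - s) (by linarith : (0:ℝ) ≤ 25/nr - t),
      mul_nonneg (by linarith : (0:ℝ) ≤ s + 25/nr) (by linarith : (0:ℝ) ≤ t + 25/nr)]
  have hcross : -((lam+lamb)*(s*t)) ≤ 50*(25/nr) :=
    cross_bound nr (lam+lamb) (s*t) hnr (by linarith) (by linarith) hst
  have hE1 : e1*(1+t) ≤ 2*(50/nr) := by
    have := mul_le_mul he12 h1t2 (le_of_lt h1t) (by positivity : (0:ℝ) ≤ 50/nr)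
    linarith
  have hE2 : e2*(1+s) ≤ 2*(50/nr) := by
    have := mul_le_mul he22 h1s2 (le_of_lt h1s) (by positivity : (0:ℝ) ≤ 50/nr)
    linarith
  have hF : 0 ≤ f*(1+s) := mul_nonneg hf (le_of_lt h1s)
  have hfin : lam*s + lamb*t ≤ 2*(50/nr) + 2*(50/nr) + 50*(25/nr) := by linarith
  have heq : 2*(50/nr) + 2*(50/nr) + 50*(25/nr) = 1450/nr := by ring
  have hle : 1450/nr ≤ 2700/nr := by
    gcongr
    norm_num
  linarith

set_option maxHeartbeats 1000000 in
theorem stmt3 :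
    ∃ C : ℝ, 0 < C ∧ ∃ N : ℕ, ∀ n : ℕ, N ≤ n →
      ∀ G : SimpleGraph (Fin n), G.Connected →
        (∀ H : SimpleGraph (Fin n), lam1 H + lam1 Hᶜ ≤ lam1 G + lam1 Gᶜ) →
        ∀ x xb : Fin n → ℝ,
          (∀ v, 0 ≤ x v) → (∀ v, 0 ≤ xb v) →
          (∑ v, x v ^ 2 = 1) → (∑ v, xb v ^ 2 = 1) →
          (adjMat G).mulVec x = lam1 G • x →
          (adjMat Gᶜ).mulVec xb = lam1 Gᶜ • xb →
          ∀ u v : Fin n,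
            |(lam1 G * x u ^ 2 + lam1 Gᶜ * xb u ^ 2) -
              (lam1 G * x v ^ 2 + lam1 Gᶜ * xb v ^ 2)| ≤ C / n := by
  refine ⟨2700, by norm_num, 100, ?_⟩
  intro n hn G _hconn hmax x xb hx hxb hx2 hxb2 heig heigb
  have hn100 : (100:ℝ) ≤ (n:ℝ) := by exact_mod_cast hn
  have hnpos : (0:ℝ) < (n:ℝ) := by linarith
  -- Step A : lower bounds on lam1 G and lam1 Gᶜ
  have hlamle : lam1 G ≤ (n:ℝ) := lam1_le G
  have hlamble : lam1 Gᶜ ≤ (n:ℝ) := lam1_le Gᶜ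
  have hple : 5/4*(n:ℝ) - 2 ≤ lam1 G + lam1 Gᶜ := by
    set w := n / 2 with hwdef
    have hw : w < n := by omega
    have h2w1 : 2*w ≤ n := by omega
    have h2w2 : n ≤ 2*w + 1 := by omega
    have hwr1 : 2*(w:ℝ) ≤ (n:ℝ) := by exact_mod_cast h2w1
    have hwr2 : (n:ℝ) ≤ 2*(w:ℝ)+1 := by exact_mod_cast h2w2
    have hb1 := CS_lb n w hw
    have hb2 := CS_compl_lb n w hw
    have hm := hmax (CS n w)
    have h3 : (5/4*(n:ℝ)-2)*(n:ℝ) ≤ (lam1 (CS n w) + lam1 (CS n w)ᶜ) * (n:ℝ) := by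
      nlinarith [hb1, hb2, hnpos, hwr1, hwr2,
        mul_nonneg (by linarith : (0:ℝ) ≤ (n:ℝ) - 2*(w:ℝ))
          (by linarith : (0:ℝ) ≤ 2*(w:ℝ)+1 - (n:ℝ))]
    have h4 : 5/4*(n:ℝ)-2 ≤ lam1 (CS n w) + lam1 (CS n w)ᶜ :=
      le_of_mul_le_mul_right (by linarith) hnpos
    linarith
  have hlam_lb : (n:ℝ)/5 ≤ lam1 G := by linarith
  have hlamb_lb : (n:ℝ)/5 ≤ lam1 Gᶜ := by linarith
  have hlam0 : (0:ℝ) ≤ lam1 G := by linarith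
  have hlamb0 : (0:ℝ) ≤ lam1 Gᶜ := by linarith
  -- Step B : eigenvector entry bounds
  have hxbound : ∀ z, x z ^ 2 ≤ 25/(n:ℝ) := by
    intro z
    have h := entry_bound G x hx2 heig z
    rw [le_div_iff₀ hnpos]
    nlinarith [sq_nonneg (x z), mul_nonneg
      (mul_nonneg (by linarith : (0:ℝ) ≤ lam1 G - (n:ℝ)/5)
        (by linarith : (0:ℝ) ≤ lam1 G + (n:ℝ)/5)) (sq_nonneg (x z)), hnpos]
  have hxbbound : ∀ z, xb z ^ 2 ≤ 25/(n:ℝ) := by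
    intro z
    have h := entry_bound Gᶜ xb hxb2 heigb z
    rw [le_div_iff₀ hnpos]
    nlinarith [sq_nonneg (xb z), mul_nonneg
      (mul_nonneg (by linarith : (0:ℝ) ≤ lam1 Gᶜ - (n:ℝ)/5)
        (by linarith : (0:ℝ) ≤ lam1 Gᶜ + (n:ℝ)/5)) (sq_nonneg (xb z)), hnpos]
  -- unit norm dot products
  have hxx : x ⬝ᵥ x = 1 := by
    rw [dotProduct, ← hx2]
    exact Finset.sum_congr rfl (fun a _ => by ring)
  have hxbxb : xb ⬝ᵥ xb = 1 := by
    rw [dotProduct, ← hxb2]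
    exact Finset.sum_congr rfl (fun a _ => by ring)
  have hep : ∀ z, (adjMat G).mulVec x z = lam1 G * x z := by
    intro z; rw [heig]; simp
  have hepb : ∀ z, (adjMat Gᶜ).mulVec xb z = lam1 Gᶜ * xb z := by
    intro z; rw [heigb]; simp
  have hxMx : x ⬝ᵥ (adjMat G).mulVec x = lam1 G := by
    rw [heig, dotProduct_smul, hxx, smul_eq_mul, mul_one]
  have hxbMxb : xb ⬝ᵥ (adjMat Gᶜ).mulVec xb = lam1 Gᶜ := by
    rw [heigb, dotProduct_smul, hxbxb, smul_eq_mul, mul_one]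
  -- Step C : key exchange inequality
  have key : ∀ p q : Fin n, p ≠ q →
      lam1 G * (x q^2 - x p^2) + lam1 Gᶜ * (xb q^2 - xb p^2) ≤ 2700/(n:ℝ) := by
    intro p q hpq
    set G' := swapG G p q with hG'
    have hsame : ∀ a b : Fin n, a ≠ p → b ≠ p → adjMat G' a b = adjMat G a b := by
      intro a b ha hb
      by_cases h : G.Adj a b
      · rw [adjMat_of_adj _ ((swapG_same G p q a b ha hb).mpr h), adjMat_of_adj _ h]
      · rw [adjMat_of_not_adj _ (fun hh => h ((swapG_same G p q a b ha hb).mp hh)),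
          adjMat_of_not_adj _ h]
    have hsamec : ∀ a b : Fin n, a ≠ p → b ≠ p → adjMat G'ᶜ a b = adjMat Gᶜ a b := by
      intro a b ha hb
      by_cases h : Gᶜ.Adj a b
      · rw [adjMat_of_adj _ ((swapG_compl_same G p q a b ha hb).mpr h), adjMat_of_adj _ h]
      · rw [adjMat_of_not_adj _ (fun hh => h ((swapG_compl_same G p q a b ha hb).mp hh)),
          adjMat_of_not_adj _ h]
    have hQ1 := exchange_quad (adjMat G) (adjMat G') (adjMat_symm G) (adjMat_symm G')
      p (adjMat_diag G p) (adjMat_diag G' p) hsame x (x q)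
    rw [swap_row_sum G p q hpq x, hxMx, hep p, hep q] at hQ1
    have hQ2 := exchange_quad (adjMat Gᶜ) (adjMat G'ᶜ) (adjMat_symm Gᶜ) (adjMat_symm G'ᶜ)
      p (adjMat_diag Gᶜ p) (adjMat_diag G'ᶜ p) hsamec xb (xb q)
    rw [swap_compl_row_sum G p q hpq xb, hxbMxb, hepb p, hepb q] at hQ2
    have hN1 := norm_update x p (x q)
    rw [hxx] at hN1
    have hN2 := norm_update xb p (xb q)
    rw [hxbxb] at hN2
    have hRay1 := lam1_rayleigh G' (Function.update x p (x q))
    have hRay2 := lam1_rayleigh G'ᶜ (Function.update xb p (xb q))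
    rw [hQ1, hN1] at hRay1
    rw [hQ2, hN2] at hRay2
    have hsum := hmax G'
    -- error terms
    set e1 : ℝ := 2 * adjMat G p q * x p * x q with he1def
    set e2 : ℝ := 2 * adjMat Gᶜ p q * xb p * xb q with he2def
    set f : ℝ := 2 * xb q ^ 2 with hfdef
    have hA0 := adjMat_nonneg G p q
    have hA1 := adjMat_le_one G p q
    have hAb0 := adjMat_nonneg Gᶜ p q
    have hAb1 := adjMat_le_one Gᶜ p q
    have he1_0 : 0 ≤ e1 := by
      rw [he1def]
      have := hx p; have := hx q
      positivity
    have he2_0 : 0 ≤ e2 := by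
      rw [he2def]
      have := hxb p; have := hxb q
      positivity
    have he1_le : e1 ≤ 50/(n:ℝ) := by
      have k1 : 2 * x p * x q ≤ x p^2 + x q^2 := by nlinarith [sq_nonneg (x p - x q)]
      have k2 : e1 ≤ 2 * x p * x q := by
        rw [he1def]
        have k3 : (2 * x p * x q) * adjMat G p q ≤ (2 * x p * x q) * 1 :=
          mul_le_mul_of_nonneg_left hA1
            (mul_nonneg (mul_nonneg (by norm_num) (hx p)) (hx q))
        calc 2 * adjMat G p q * x p * x q = (2 * x p * x q) * adjMat G p q := by ring
        _ ≤ (2 * x p * x q) * 1 := k3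
        _ = 2 * x p * x q := by ring
      have k4 := hxbound p
      have k5 := hxbound q
      have : (50:ℝ)/(n:ℝ) = 25/(n:ℝ) + 25/(n:ℝ) := by ring
      linarith
    have he2_le : e2 ≤ 50/(n:ℝ) := by
      have k1 : 2 * xb p * xb q ≤ xb p^2 + xb q^2 := by nlinarith [sq_nonneg (xb p - xb q)]
      have k2 : e2 ≤ 2 * xb p * xb q := by
        rw [he2def]
        have k3 : (2 * xb p * xb q) * adjMat Gᶜ p q ≤ (2 * xb p * xb q) * 1 :=
          mul_le_mul_of_nonneg_left hAb1
            (mul_nonneg (mul_nonneg (by norm_num) (hxb p)) (hxb q))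
        calc 2 * adjMat Gᶜ p q * xb p * xb q = (2 * xb p * xb q) * adjMat Gᶜ p q := by ring
        _ ≤ (2 * xb p * xb q) * 1 := k3
        _ = 2 * xb p * xb q := by ring
      have k4 := hxbbound p
      have k5 := hxbbound q
      have : (50:ℝ)/(n:ℝ) = 25/(n:ℝ) + 25/(n:ℝ) := by ring
      linarith
    have hf0 : 0 ≤ f := by rw [hfdef]; positivity
    have hR1 : lam1 G * (1 + 2*(x q^2 - x p^2)) - e1 ≤ lam1 G' * (1 + (x q^2 - x p^2)) := by
      have hrw : lam1 G - 2 * x p * (lam1 G * x p)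
            + 2 * x q * (lam1 G * x q - adjMat G p q * x p)
          = lam1 G * (1 + 2*(x q^2 - x p^2)) - e1 := by
        rw [he1def]; ring
      have hrw2 : lam1 G' * (1 - x p * x p + x q * x q)
          = lam1 G' * (1 + (x q^2 - x p^2)) := by ring
      rw [hrw, hrw2] at hRay1
      exact hRay1
    have hR2 : lam1 Gᶜ * (1 + 2*(xb q^2 - xb p^2)) + f - e2
        ≤ lam1 G'ᶜ * (1 + (xb q^2 - xb p^2)) := by
      have hrw : lam1 Gᶜ - 2 * xb p * (lam1 Gᶜ * xb p)
            + 2 * xb q * (xb q + lam1 Gᶜ * xb q - adjMat Gᶜ p q * xb p)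
          = lam1 Gᶜ * (1 + 2*(xb q^2 - xb p^2)) + f - e2 := by
        rw [he2def, hfdef]; ring
      have hrw2 : lam1 G'ᶜ * (1 - xb p * xb p + xb q * xb q)
          = lam1 G'ᶜ * (1 + (xb q^2 - xb p^2)) := by ring
      rw [hrw, hrw2] at hRay2
      exact hRay2
    exact final_arith (n:ℝ) (lam1 G) (lam1 Gᶜ) (x q^2 - x p^2) (xb q^2 - xb p^2)
      e1 e2 f (lam1 G') (lam1 G'ᶜ) hn100
      (by linarith [hxbound q, sq_nonneg (x p)])
      (by linarith [hxbound p, sq_nonneg (x q)])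
      (by linarith [hxbbound q, sq_nonneg (xb p)])
      (by linarith [hxbbound p, sq_nonneg (xb q)])
      hlamle hlamble hlam0 hlamb0
      he1_0 he1_le he2_0 he2_le hf0 hR1 hR2 hsum
  -- conclusion
  intro u v
  by_cases huv : u = v
  · subst huv
    simp only [sub_self, abs_zero]
    positivity
  · rw [abs_sub_le_iff]
    constructor
    · have := key v u (fun h => huv h.symm)
      linarith
    · have := key u v huv
      linarith
end basics
end

section
/- Let n ≥ 6 and let G be a graph maximizing the Q-spread s_Q among all connected graphs on n vertices. Then q1(G) > 2n − 5 and qn(G) < 3. -/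
open Matrix Finset in
lemma adjMat_apply {n : ℕ} (G : SimpleGraph (Fin n)) [inst : DecidableRel G.Adj] (v u : Fin n) :
    adjMat G v u = if G.Adj v u then 1 else 0 := by
  unfold adjMat
  simp [SimpleGraph.adjMatrix_apply]

open Matrix Finset in
lemma deg_eq_card {n : ℕ} (G : SimpleGraph (Fin n)) [inst : DecidableRel G.Adj] (v : Fin n) :
    deg G v = (univ.filter (G.Adj v)).card := by
  rw [deg, Nat.card_eq_fintype_card]
  exact Fintype.card_subtype _

open Matrix Finset in
lemma signlessLap_isHermitian {n : ℕ} (G : SimpleGraph (Fin n)) :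
    (signlessLap G).IsHermitian := by
  classical
  refine Matrix.IsHermitian.add (Matrix.isHermitian_diagonal _) ?_
  ext u v
  simp [adjMat_apply, G.adj_comm u v]

open Matrix Finset in
lemma deg_eq_sum {n : ℕ} (G : SimpleGraph (Fin n)) [DecidableRel G.Adj] (v : Fin n) :
    (deg G v : ℝ) = ∑ u, (if G.Adj v u then (1:ℝ) else 0) := by
  rw [deg_eq_card, Finset.card_filter]
  push_cast
  exact Finset.sum_congr rfl fun u _ => by split_ifs <;> simp

open Matrix Finset in
lemma deg_le {n : ℕ} (G : SimpleGraph (Fin n)) [DecidableRel G.Adj] (v : Fin n) :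
    (deg G v : ℝ) ≤ (n : ℝ) - 1 := by
  have h1 : (univ.filter (G.Adj v)).card ≤ (univ.erase v).card := by
    apply Finset.card_le_card
    intro u hu
    simp only [Finset.mem_filter, Finset.mem_univ, true_and] at hu
    exact Finset.mem_erase.2 ⟨fun h => G.loopless.irrefl v (h ▸ hu), Finset.mem_univ u⟩
  have h2 : (univ.erase v).card = n - 1 := by
    rw [Finset.card_erase_of_mem (Finset.mem_univ v)]
    simp
  rw [deg_eq_card]
  have hn : 1 ≤ n := v.pos
  have := h1.trans h2.le
  have : ((univ.filter (G.Adj v)).card : ℝ) ≤ ((n - 1 : ℕ) : ℝ) := by exact_mod_cast this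
  calc ((univ.filter (G.Adj v)).card : ℝ) ≤ ((n - 1 : ℕ) : ℝ) := this
    _ = (n : ℝ) - 1 := by push_cast [hn]; ring

open Matrix Finset in
lemma quadform {n : ℕ} (G : SimpleGraph (Fin n)) [DecidableRel G.Adj] (x : Fin n → ℝ) :
    x ⬝ᵥ (signlessLap G) *ᵥ x
      = ∑ v, ∑ u, (if G.Adj v u then x v * (x v + x u) else 0) := by
  classical
  have hdeg := deg_eq_sum G
  simp only [signlessLap, dotProduct, Matrix.mulVec, Matrix.add_apply,
    Matrix.diagonal_apply, adjMat_apply, add_mul, ite_mul, one_mul, zero_mul,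
    Finset.sum_add_distrib, Finset.sum_ite_eq, Finset.mem_univ, if_true]
  refine Finset.sum_congr rfl fun v _ => ?_
  rw [hdeg v, mul_add, Finset.sum_mul, Finset.mul_sum, Finset.mul_sum, ← Finset.sum_add_distrib]
  exact Finset.sum_congr rfl fun u _ => by split_ifs <;> ring

open Matrix Finset in
lemma quadform_two {n : ℕ} (G : SimpleGraph (Fin n)) [DecidableRel G.Adj] (x : Fin n → ℝ) :
    2 * (x ⬝ᵥ (signlessLap G) *ᵥ x)
      = ∑ v, ∑ u, (if G.Adj v u then (x v + x u)^2 else 0) := by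
  rw [quadform, two_mul]
  nth_rewrite 2 [Finset.sum_comm]
  rw [← Finset.sum_add_distrib]
  refine Finset.sum_congr rfl fun v _ => ?_
  rw [← Finset.sum_add_distrib]
  refine Finset.sum_congr rfl fun u _ => ?_
  by_cases h : G.Adj v u
  · rw [if_pos h, if_pos h.symm, if_pos h]; ring
  · rw [if_neg h, if_neg (fun h' => h h'.symm), if_neg h]; ring

open Matrix Finset in
lemma quadform_nonneg {n : ℕ} (G : SimpleGraph (Fin n)) [DecidableRel G.Adj] (x : Fin n → ℝ) :
    0 ≤ x ⬝ᵥ (signlessLap G) *ᵥ x := by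
  have h := quadform_two G x
  have : (0:ℝ) ≤ ∑ v, ∑ u, (if G.Adj v u then (x v + x u)^2 else 0) := by
    apply Finset.sum_nonneg; intro v _
    apply Finset.sum_nonneg; intro u _
    split_ifs <;> positivity
  linarith

open Matrix Finset in
lemma quadform_le {n : ℕ} (G : SimpleGraph (Fin n)) [DecidableRel G.Adj] (x : Fin n → ℝ) :
    x ⬝ᵥ (signlessLap G) *ᵥ x ≤ (2*(n:ℝ) - 2) * (x ⬝ᵥ x) := by
  have h2 := quadform_two G x
  have key : ∑ v, ∑ u, (if G.Adj v u then (x v + x u)^2 else 0)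
      ≤ ∑ v, ∑ u, (if G.Adj v u then 2*(x v)^2 + 2*(x u)^2 else 0) := by
    refine Finset.sum_le_sum fun v _ => Finset.sum_le_sum fun u _ => ?_
    split_ifs
    · nlinarith [sq_nonneg (x v - x u)]
    · exact le_rfl
  have hsplit : ∑ v, ∑ u, (if G.Adj v u then 2*(x v)^2 + 2*(x u)^2 else 0)
      = 4 * ∑ v, (deg G v : ℝ) * (x v)^2 := by
    have e1 : ∀ v u, (if G.Adj v u then 2*(x v)^2 + 2*(x u)^2 else 0)
        = (if G.Adj v u then 2*(x v)^2 else 0) + (if G.Adj v u then 2*(x u)^2 else 0) := by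
      intro v u; split_ifs <;> ring
    simp only [e1, Finset.sum_add_distrib]
    have e2 : ∑ v, ∑ u, (if G.Adj v u then 2*(x u)^2 else 0)
        = ∑ v, ∑ u, (if G.Adj v u then 2*(x v)^2 else 0) := by
      rw [Finset.sum_comm]
      refine Finset.sum_congr rfl fun v _ => Finset.sum_congr rfl fun u _ => ?_
      by_cases h : G.Adj v u
      · rw [if_pos h, if_pos h.symm]
      · rw [if_neg h, if_neg (fun h' => h h'.symm)]
    rw [e2]
    have e3 : ∀ v, ∑ u, (if G.Adj v u then 2*(x v)^2 else 0) = 2 * ((deg G v : ℝ) * (x v)^2) := by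
      intro v
      rw [deg_eq_sum, Finset.sum_mul, Finset.mul_sum]
      refine Finset.sum_congr rfl fun u _ => by split_ifs <;> ring
    simp only [e3]
    rw [← Finset.sum_add_distrib, Finset.mul_sum]
    exact Finset.sum_congr rfl fun v _ => by ring
  have hd : x ⬝ᵥ x = ∑ v, (x v)^2 := by simp [dotProduct, sq]
  have hdegsum : ∑ v, (deg G v : ℝ) * (x v)^2 ≤ ((n:ℝ) - 1) * (x ⬝ᵥ x) := by
    rw [hd, Finset.mul_sum]
    exact Finset.sum_le_sum fun v _ =>
      mul_le_mul_of_nonneg_right (deg_le G v) (sq_nonneg _)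
  nlinarith [h2, key, hsplit, hdegsum]

open Matrix Finset in
lemma eig_mem {n : ℕ} {M : Matrix (Fin n) (Fin n) ℝ} (hM : M.IsHermitian) (i : Fin n) :
    hM.eigenvalues i ∈ eigSet M :=
  ⟨_, (WithLp.ofLp_eq_zero 2).ne.2 <| hM.eigenvectorBasis.orthonormal.ne_zero i, hM.mulVec_eigenvectorBasis i⟩

open Matrix Finset in
lemma rayleigh_bounds {n : ℕ} {M : Matrix (Fin n) (Fin n) ℝ} (hM : M.IsHermitian)
    (hba : BddAbove (eigSet M)) (hbb : BddBelow (eigSet M)) (x : Fin n → ℝ) :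
    sInf (eigSet M) * (x ⬝ᵥ x) ≤ x ⬝ᵥ M *ᵥ x ∧ x ⬝ᵥ M *ᵥ x ≤ sSup (eigSet M) * (x ⬝ᵥ x) := by
  classical
  set U : Matrix (Fin n) (Fin n) ℝ := (hM.eigenvectorUnitary : Matrix (Fin n) (Fin n) ℝ) with hUdef
  have hUmem := hM.eigenvectorUnitary.2
  have hU1 : star U * U = 1 := (Matrix.mem_unitaryGroup_iff').mp hUmem
  have hU2 : U * star U = 1 := (Matrix.mem_unitaryGroup_iff).mp hUmem
  have hsU : star U = Uᵀ := by
    rw [Matrix.star_eq_conjTranspose, Matrix.conjTranspose_eq_transpose_of_trivial]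
  set y : Fin n → ℝ := (star U) *ᵥ x with hy
  have hyx : x ⬝ᵥ x = y ⬝ᵥ y := by
    rw [hy, Matrix.dotProduct_mulVec, hsU, Matrix.vecMul_transpose, Matrix.mulVec_mulVec,
      ← hsU, hU2, Matrix.one_mulVec]
  have hQ : x ⬝ᵥ M *ᵥ x = ∑ i, hM.eigenvalues i * (y i)^2 := by
    conv_lhs => rw [hM.spectral_theorem, Unitary.conjStarAlgAut_apply]
    rw [← Matrix.mulVec_mulVec, ← Matrix.mulVec_mulVec, Matrix.dotProduct_mulVec, ← hy]
    have hxU : x ᵥ* U = y := by rw [hy, hsU, Matrix.mulVec_transpose]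
    rw [hxU]
    simp only [dotProduct, Matrix.mulVec_diagonal, Function.comp_apply,
      RCLike.ofReal_real_eq_id, id_eq]
    exact Finset.sum_congr rfl fun i _ => by ring
  have hyy : y ⬝ᵥ y = ∑ i, (y i)^2 := by simp [dotProduct, sq]
  constructor
  · rw [hQ, hyx, hyy, Finset.mul_sum]
    exact Finset.sum_le_sum fun i _ =>
      mul_le_mul_of_nonneg_right (csInf_le hbb (eig_mem hM i)) (sq_nonneg _)
  · rw [hQ, hyx, hyy, Finset.mul_sum]
    exact Finset.sum_le_sum fun i _ =>
      mul_le_mul_of_nonneg_right (le_csSup hba (eig_mem hM i)) (sq_nonneg _)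

open Matrix Finset in
lemma eigSet_sub {n : ℕ} (G : SimpleGraph (Fin n)) :
    eigSet (signlessLap G) ⊆ Set.Icc 0 (2*(n:ℝ)-2) := by
  classical
  rintro μ ⟨x, hx0, hx⟩
  have hxx : 0 < x ⬝ᵥ x := by
    have h1 : (0:ℝ) ≤ x ⬝ᵥ x := by
      simp only [dotProduct]
      exact Finset.sum_nonneg fun i _ => mul_self_nonneg _
    rcases lt_or_eq_of_le h1 with h | h
    · exact h
    · exact absurd (dotProduct_self_eq_zero.mp h.symm) hx0
  have hμ : x ⬝ᵥ (signlessLap G) *ᵥ x = μ * (x ⬝ᵥ x) := by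
    rw [hx]
    simp [dotProduct, Finset.mul_sum]
    exact Finset.sum_congr rfl fun i _ => by ring
  constructor
  · have h0 := quadform_nonneg G x
    rw [hμ] at h0
    exact nonneg_of_mul_nonneg_left h0 hxx
  · have h1 := quadform_le G x
    rw [hμ] at h1
    exact le_of_mul_le_mul_right h1 hxx

noncomputable def Xv (n i : ℕ) : ℝ := if i < n - 1 then 1 else 0
noncomputable def Yv (n i : ℕ) : ℝ := if i = n - 1 then (n:ℝ) - 1 else if i = 0 then -1 else 0

def adjC (n i j : ℕ) : Prop := i ≠ j ∧ ((i < n - 1 ∧ j < n - 1) ∨ i = 0 ∨ j = 0)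

instance (n i j : ℕ) : Decidable (adjC n i j) := inferInstanceAs (Decidable (_ ∧ _))

noncomputable def gA (n i j : ℕ) : ℝ := if adjC n i j then Xv n i * (Xv n i + Xv n j) else 0
noncomputable def gB (n i j : ℕ) : ℝ := if adjC n i j then Yv n i * (Yv n i + Yv n j) else 0

open Finset in
lemma sum_gA {n : ℕ} (hn : 6 ≤ n) :
    ∑ i ∈ range n, ∑ j ∈ range n, gA n i j = 2*(n:ℝ)^2 - 6*(n:ℝ) + 5 := by
  obtain ⟨m, rfl⟩ : ∃ m, n = m + 1 := ⟨n - 1, by omega⟩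
  have hm : 5 ≤ m := by omega
  have h1 : ∀ i j, i < m → j < m → gA (m+1) i j = if i = j then 0 else 2 := by
    intro i j hi hj
    unfold gA adjC Xv
    simp only [Nat.add_sub_cancel, ne_eq, eq_self_iff_true, true_or, or_true, and_true, true_and]
    split_ifs <;> try (exfalso; omega)
    all_goals push_cast
    all_goals norm_num
  have h2 : ∀ i, i < m → gA (m+1) i m = if i = 0 then 1 else 0 := by
    intro i hi
    unfold gA adjC Xv
    simp only [Nat.add_sub_cancel, ne_eq, eq_self_iff_true, true_or, or_true, and_true, true_and]
    split_ifs <;> try (exfalso; omega)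
    all_goals push_cast
    all_goals norm_num
  have h3 : ∀ j, j < m → gA (m+1) m j = 0 := by
    intro j hj
    unfold gA adjC Xv
    simp only [Nat.add_sub_cancel, ne_eq, eq_self_iff_true, true_or, or_true, and_true, true_and]
    split_ifs <;> try (exfalso; omega)
    all_goals push_cast
    all_goals norm_num
  have h4 : gA (m+1) m m = 0 := by
    unfold gA adjC Xv
    simp only [Nat.add_sub_cancel, ne_eq, eq_self_iff_true, true_or, or_true, and_true, true_and]
    split_ifs <;> try (exfalso; omega)
    all_goals push_cast
    all_goals norm_num
  simp only [Finset.sum_range_succ]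
  have e1 : ∀ i ∈ range m, ∑ j ∈ range m, gA (m+1) i j + gA (m+1) i m
      = (2*(m:ℝ) - 2) + (if i = 0 then 1 else 0) := by
    intro i hi
    have hi' : i < m := mem_range.mp hi
    have einner : ∑ j ∈ range m, gA (m+1) i j = 2*(m:ℝ) - 2 := by
      rw [Finset.sum_congr rfl fun j hj => h1 i j hi' (mem_range.mp hj)]
      have hf : (fun j => if i = j then (0:ℝ) else 2) = fun j => 2 - (if i = j then 2 else 0) :=
        funext fun j => by split_ifs <;> ring
      rw [hf, Finset.sum_sub_distrib, Finset.sum_const, Finset.sum_ite_eq,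
        if_pos hi, Finset.card_range]
      push_cast; ring
    rw [einner, h2 i hi']
  rw [Finset.sum_congr rfl e1, Finset.sum_congr rfl fun j hj => h3 j (mem_range.mp hj), h4,
    Finset.sum_add_distrib, Finset.sum_const, Finset.sum_ite_eq', if_pos (mem_range.mpr (by omega)),
    Finset.sum_const, Finset.card_range]
  push_cast; ring

open Finset in
lemma sum_gB {n : ℕ} (hn : 6 ≤ n) :
    ∑ i ∈ range n, ∑ j ∈ range n, gB n i j = ((n:ℝ) - 1) * ((n:ℝ) - 2) := by
  obtain ⟨m, rfl⟩ : ∃ m, n = m + 1 := ⟨n - 1, by omega⟩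
  have hm : 5 ≤ m := by omega
  have b2 : ∀ j, j < m → gB (m+1) 0 j = if j = 0 then 0 else 1 := by
    intro j hj
    unfold gB adjC Yv
    simp only [Nat.add_sub_cancel, ne_eq, eq_self_iff_true, true_or, or_true, and_true, true_and]
    split_ifs <;> try (exfalso; omega)
    all_goals push_cast
    all_goals norm_num
  have b3 : gB (m+1) 0 m = 1 - (m:ℝ) := by
    unfold gB adjC Yv
    simp only [Nat.add_sub_cancel, ne_eq, eq_self_iff_true, true_or, or_true, and_true, true_and]
    split_ifs <;> try (exfalso; omega)
    all_goals push_cast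
    all_goals try ring
    all_goals norm_num
  have bmid : ∀ i j, i < m → i ≠ 0 → gB (m+1) i j = 0 := by
    intro i j hi h0
    unfold gB adjC Yv
    simp only [Nat.add_sub_cancel, ne_eq, eq_self_iff_true, true_or, or_true, and_true, true_and]
    split_ifs <;> try (exfalso; omega)
    all_goals push_cast
    all_goals norm_num
  have b4 : ∀ j, j < m → gB (m+1) m j = if j = 0 then (m:ℝ)*((m:ℝ)-1) else 0 := by
    intro j hj
    unfold gB adjC Yv
    simp only [Nat.add_sub_cancel, ne_eq, eq_self_iff_true, true_or, or_true, and_true, true_and]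
    split_ifs <;> try (exfalso; omega)
    all_goals push_cast
    all_goals try ring
    all_goals norm_num
  have b5 : gB (m+1) m m = 0 := by
    unfold gB adjC Yv
    simp only [Nat.add_sub_cancel, ne_eq, eq_self_iff_true, true_or, or_true, and_true, true_and]
    split_ifs <;> try (exfalso; omega)
    all_goals push_cast
    all_goals norm_num
  simp only [Finset.sum_range_succ]
  have rows : ∀ i ∈ range m, ∑ j ∈ range m, gB (m+1) i j + gB (m+1) i m = 0 := by
    intro i hi
    have hi' : i < m := mem_range.mp hi
    by_cases h0 : i = 0
    · subst h0
      rw [Finset.sum_congr rfl fun j hj => b2 j (mem_range.mp hj), b3]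
      have hf : (fun j => if j = 0 then (0:ℝ) else 1) = fun j => 1 - (if j = 0 then 1 else 0) :=
        funext fun j => by split_ifs <;> ring
      rw [hf, Finset.sum_sub_distrib, Finset.sum_const, Finset.sum_ite_eq',
        if_pos (mem_range.mpr (by omega)), Finset.card_range]
      push_cast; ring
    · rw [Finset.sum_congr rfl fun j _ => bmid i j hi' h0, bmid i m hi' h0, Finset.sum_const]
      simp
  rw [Finset.sum_congr rfl rows, Finset.sum_congr rfl fun j hj => b4 j (mem_range.mp hj), b5,
    Finset.sum_const, Finset.sum_ite_eq', if_pos (mem_range.mpr (by omega)), Finset.card_range]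
  push_cast; ring

open Matrix Finset in
lemma kplus_adj_iff {n : ℕ} (v u : Fin n) : (KPlus n).Adj v u ↔ adjC n (v:ℕ) (u:ℕ) := by
  unfold KPlus adjC
  simp [Fin.ext_iff]

open Matrix Finset in
lemma kplus_quad_x {n : ℕ} (hn : 6 ≤ n) [DecidableRel (KPlus n).Adj] :
    (fun v : Fin n => Xv n ↑v) ⬝ᵥ (signlessLap (KPlus n)) *ᵥ (fun v : Fin n => Xv n ↑v)
      = 2*(n:ℝ)^2 - 6*(n:ℝ) + 5 := by
  rw [quadform]
  have e : ∀ v u : Fin n,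
      (if (KPlus n).Adj v u then Xv n ↑v * (Xv n ↑v + Xv n ↑u) else 0) = gA n ↑v ↑u := by
    intro v u
    unfold gA
    by_cases h : (KPlus n).Adj v u
    · rw [if_pos h, if_pos ((kplus_adj_iff v u).mp h)]
    · rw [if_neg h, if_neg (fun hc => h ((kplus_adj_iff v u).mpr hc))]
  calc ∑ v : Fin n, ∑ u : Fin n, (if (KPlus n).Adj v u then Xv n ↑v * (Xv n ↑v + Xv n ↑u) else 0)
      = ∑ v : Fin n, ∑ u : Fin n, gA n ↑v ↑u := by
        exact Finset.sum_congr rfl fun v _ => Finset.sum_congr rfl fun u _ => e v u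
    _ = ∑ v : Fin n, ∑ j ∈ range n, gA n ↑v j := by
        exact Finset.sum_congr rfl fun v _ => Fin.sum_univ_eq_sum_range (gA n ↑v) n
    _ = ∑ i ∈ range n, ∑ j ∈ range n, gA n i j :=
        Fin.sum_univ_eq_sum_range (fun i => ∑ j ∈ range n, gA n i j) n
    _ = 2*(n:ℝ)^2 - 6*(n:ℝ) + 5 := sum_gA hn

open Matrix Finset in
lemma kplus_quad_y {n : ℕ} (hn : 6 ≤ n) [DecidableRel (KPlus n).Adj] :
    (fun v : Fin n => Yv n ↑v) ⬝ᵥ (signlessLap (KPlus n)) *ᵥ (fun v : Fin n => Yv n ↑v)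
      = ((n:ℝ) - 1) * ((n:ℝ) - 2) := by
  rw [quadform]
  have e : ∀ v u : Fin n,
      (if (KPlus n).Adj v u then Yv n ↑v * (Yv n ↑v + Yv n ↑u) else 0) = gB n ↑v ↑u := by
    intro v u
    unfold gB
    by_cases h : (KPlus n).Adj v u
    · rw [if_pos h, if_pos ((kplus_adj_iff v u).mp h)]
    · rw [if_neg h, if_neg (fun hc => h ((kplus_adj_iff v u).mpr hc))]
  calc ∑ v : Fin n, ∑ u : Fin n, (if (KPlus n).Adj v u then Yv n ↑v * (Yv n ↑v + Yv n ↑u) else 0)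
      = ∑ v : Fin n, ∑ u : Fin n, gB n ↑v ↑u := by
        exact Finset.sum_congr rfl fun v _ => Finset.sum_congr rfl fun u _ => e v u
    _ = ∑ v : Fin n, ∑ j ∈ range n, gB n ↑v j := by
        exact Finset.sum_congr rfl fun v _ => Fin.sum_univ_eq_sum_range (gB n ↑v) n
    _ = ∑ i ∈ range n, ∑ j ∈ range n, gB n i j :=
        Fin.sum_univ_eq_sum_range (fun i => ∑ j ∈ range n, gB n i j) n
    _ = ((n:ℝ) - 1) * ((n:ℝ) - 2) := sum_gB hn

open Matrix Finset in
lemma kplus_dot_x {n : ℕ} (hn : 6 ≤ n) :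
    (fun v : Fin n => Xv n ↑v) ⬝ᵥ (fun v : Fin n => Xv n ↑v) = (n:ℝ) - 1 := by
  obtain ⟨m, rfl⟩ : ∃ m, n = m + 1 := ⟨n - 1, by omega⟩
  have hm : 5 ≤ m := by omega
  simp only [dotProduct]
  rw [Fin.sum_univ_eq_sum_range (fun i => Xv (m+1) i * Xv (m+1) i) (m+1),
    Finset.sum_range_succ]
  have e : ∀ i ∈ range m, Xv (m+1) i * Xv (m+1) i = 1 := by
    intro i hi
    have := mem_range.mp hi
    unfold Xv
    rw [if_pos (by omega)]; norm_num
  have em : Xv (m+1) m * Xv (m+1) m = 0 := by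
    unfold Xv
    rw [if_neg (by omega)]; norm_num
  rw [Finset.sum_congr rfl e, em, Finset.sum_const, Finset.card_range]
  push_cast; ring

open Matrix Finset in
lemma kplus_dot_y {n : ℕ} (hn : 6 ≤ n) :
    (fun v : Fin n => Yv n ↑v) ⬝ᵥ (fun v : Fin n => Yv n ↑v) = ((n:ℝ) - 1)^2 + 1 := by
  obtain ⟨m, rfl⟩ : ∃ m, n = m + 1 := ⟨n - 1, by omega⟩
  have hm : 5 ≤ m := by omega
  simp only [dotProduct]
  rw [Fin.sum_univ_eq_sum_range (fun i => Yv (m+1) i * Yv (m+1) i) (m+1),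
    Finset.sum_range_succ]
  have e : ∀ i ∈ range m, Yv (m+1) i * Yv (m+1) i = if i = 0 then 1 else 0 := by
    intro i hi
    have := mem_range.mp hi
    unfold Yv
    split_ifs <;> try (exfalso; omega)
    all_goals norm_num
  have em : Yv (m+1) m * Yv (m+1) m = ((m:ℝ))^2 := by
    unfold Yv
    rw [if_pos (by omega)]
    push_cast; ring
  rw [Finset.sum_congr rfl e, em, Finset.sum_ite_eq', if_pos (mem_range.mpr (by omega))]
  push_cast; ring

lemma kplus_connected {n : ℕ} (hn : 6 ≤ n) : (KPlus n).Connected := by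
  have hn0 : 0 < n := by omega
  have hadj : ∀ v : Fin n, v ≠ ⟨0, hn0⟩ → (KPlus n).Adj v ⟨0, hn0⟩ := by
    intro v hv
    exact ⟨hv, Or.inr (Or.inr rfl)⟩
  have key : ∀ u : Fin n, (KPlus n).Reachable u ⟨0, hn0⟩ := by
    intro u
    by_cases h : u = ⟨0, hn0⟩
    · rw [h]
    · exact (hadj u h).reachable
  rw [SimpleGraph.connected_iff]
  exact ⟨fun u v => (key u).trans (key v).symm, ⟨⟨0, hn0⟩⟩⟩

open Matrix Finset in
lemma qfacts {n : ℕ} (hn : 0 < n) (G : SimpleGraph (Fin n)) :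
    (∀ x : Fin n → ℝ, lamMin (signlessLap G) * (x ⬝ᵥ x) ≤ x ⬝ᵥ (signlessLap G) *ᵥ x
        ∧ x ⬝ᵥ (signlessLap G) *ᵥ x ≤ lamMax (signlessLap G) * (x ⬝ᵥ x))
      ∧ 0 ≤ lamMin (signlessLap G) ∧ lamMax (signlessLap G) ≤ 2*(n:ℝ)-2 := by
  classical
  have hH := signlessLap_isHermitian G
  have hsub := eigSet_sub G
  have hba : BddAbove (eigSet (signlessLap G)) := ⟨2*(n:ℝ)-2, fun μ hμ => (hsub hμ).2⟩
  have hbb : BddBelow (eigSet (signlessLap G)) := ⟨0, fun μ hμ => (hsub hμ).1⟩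
  have hne : (eigSet (signlessLap G)).Nonempty := ⟨_, eig_mem hH ⟨0, hn⟩⟩
  exact ⟨fun x => rayleigh_bounds hH hba hbb x,
    le_csInf hne fun μ hμ => (hsub hμ).1,
    csSup_le hne fun μ hμ => (hsub hμ).2⟩


theorem stmt8 (n : ℕ) (hn : 6 ≤ n) (G : SimpleGraph (Fin n)) (hconn : G.Connected)
    (hmax : ∀ H : SimpleGraph (Fin n), H.Connected → sQ H ≤ sQ G) :
    2 * (n : ℝ) - 5 < q1 G ∧ qmin G < 3 := by
  classical
  have hn0 : 0 < n := by omega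
  have hn6 : (6:ℝ) ≤ (n:ℝ) := by exact_mod_cast hn
  obtain ⟨hRayG, hminG, hmaxG⟩ := qfacts hn0 G
  obtain ⟨hRayK, hminK, hmaxK⟩ := qfacts hn0 (KPlus n)
  have hx := (hRayK (fun v : Fin n => Xv n ↑v)).2
  have hy := (hRayK (fun v : Fin n => Yv n ↑v)).1
  rw [kplus_quad_x hn, kplus_dot_x hn] at hx
  rw [kplus_quad_y hn, kplus_dot_y hn] at hy
  set a := lamMax (signlessLap (KPlus n)) with ha
  set b := lamMin (signlessLap (KPlus n)) with hb
  have haK : 2*(n:ℝ) - 4 < a := by nlinarith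
  have hbK : b < 1 := by nlinarith
  have hKG : sQ (KPlus n) ≤ sQ G := hmax (KPlus n) (kplus_connected hn)
  have hsK : 2*(n:ℝ) - 5 < sQ (KPlus n) := by
    unfold sQ q1 qmin
    rw [← ha, ← hb]
    linarith
  have hsG : 2*(n:ℝ) - 5 < sQ G := lt_of_lt_of_le hsK hKG
  unfold sQ q1 qmin at hsG
  constructor
  · unfold q1
    linarith
  · unfold qmin
    linarith
end
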